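/- Chaining bound: for a continuous function y : [0,T] → ℝ^d, sup over pairs s ≤ t ≤ s + T/2^n of |y(t) - y(s)| is at most 2 · Σ_{m≥0} max_{0 ≤ k ≤ 2^{n+m}-1} |y((k+1)T/2^{n+m}) - y(kT/2^{n+m})|. -/

import Mathlib

open Set ENNReal Filter

section ChainingAux

/-- The sup of level-`n+m` increments. -/
noncomputable def chainM {d : ℕ} (T : ℝ) (y : ℝ → EuclideanSpace ℝ (Fin d)) (n m : ℕ) : ℝ≥0∞ :=
  ⨆ k : Fin (2 ^ (n + m)), ENNReal.ofReal
    ‖y ((((k : ℕ) : ℝ) + 1) * T / 2 ^ (n + m)) - y (((k : ℕ) : ℝ) * T / 2 ^ (n + m))‖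

/-- Dyadic approximation from below at level `n+m`. -/
noncomputable def chainP (T : ℝ) (n : ℕ) (x : ℝ) (m : ℕ) : ℝ :=
  (⌊x * 2 ^ (n + m) / T⌋₊ : ℝ) * T / 2 ^ (n + m)

lemma chainM_def {d : ℕ} (T : ℝ) (y : ℝ → EuclideanSpace ℝ (Fin d)) (n m : ℕ) :
    chainM T y n m = ⨆ k : Fin (2 ^ (n + m)), ENNReal.ofReal
      ‖y ((((k : ℕ) : ℝ) + 1) * T / 2 ^ (n + m)) - y (((k : ℕ) : ℝ) * T / 2 ^ (n + m))‖ := rfl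

lemma chain_inc_le {d : ℕ} (T : ℝ) (y : ℝ → EuclideanSpace ℝ (Fin d)) (n m k : ℕ)
    (hk : k < 2 ^ (n + m)) :
    ENNReal.ofReal ‖y (((k : ℝ) + 1) * T / 2 ^ (n + m)) - y ((k : ℝ) * T / 2 ^ (n + m))‖
      ≤ chainM T y n m :=
  le_iSup (fun j : Fin (2 ^ (n + m)) => ENNReal.ofReal
    ‖y ((((j : ℕ) : ℝ) + 1) * T / 2 ^ (n + m)) - y (((j : ℕ) : ℝ) * T / 2 ^ (n + m))‖) ⟨k, hk⟩

lemma chainP_le (T : ℝ) (hT : 0 < T) (n : ℕ) (x : ℝ) (m : ℕ) (hx : 0 ≤ x) :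
    chainP T n x m ≤ x := by
  unfold chainP
  rw [div_le_iff₀ (by positivity)]
  have h := Nat.floor_le (show (0:ℝ) ≤ x * 2 ^ (n + m) / T by positivity)
  rw [le_div_iff₀ hT] at h
  exact h

lemma chainP_nonneg (T : ℝ) (hT : 0 < T) (n : ℕ) (x : ℝ) (m : ℕ) : 0 ≤ chainP T n x m := by
  unfold chainP; positivity

lemma chainP_lt (T : ℝ) (hT : 0 < T) (n : ℕ) (x : ℝ) (m : ℕ) :
    x - chainP T n x m < T / 2 ^ (n + m) := by
  unfold chainP
  have h1 : x * 2 ^ (n + m) / T < ⌊x * 2 ^ (n + m) / T⌋₊ + 1 := Nat.lt_floor_add_one _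
  have h2 : (0:ℝ) < 2 ^ (n + m) := by positivity
  rw [div_lt_iff₀ hT] at h1
  rw [sub_lt_iff_lt_add, ← add_div, lt_div_iff₀ h2]
  nlinarith

lemma chainP_mem (T : ℝ) (hT : 0 < T) (n : ℕ) (x : ℝ) (m : ℕ) (hx : x ∈ Icc 0 T) :
    chainP T n x m ∈ Icc 0 T :=
  ⟨chainP_nonneg T hT n x m, (chainP_le T hT n x m hx.1).trans hx.2⟩

lemma chainP_tendsto (T : ℝ) (hT : 0 < T) (n : ℕ) (x : ℝ) (hx : 0 ≤ x) :
    Tendsto (chainP T n x) atTop (nhds x) := by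
  have h0 : Tendsto (fun m : ℕ => T / 2 ^ (n + m)) atTop (nhds 0) := by
    have h1 : Tendsto (fun m : ℕ => ((1:ℝ)/2) ^ (n + m)) atTop (nhds 0) := by
      have h2 := tendsto_pow_atTop_nhds_zero_of_lt_one (by norm_num : (0:ℝ) ≤ 1/2)
        (by norm_num : (1:ℝ)/2 < 1)
      have h3 := h2.comp (tendsto_add_atTop_nat n)
      refine h3.congr fun m => ?_
      simp [Function.comp, add_comm]
    have h3 := h1.const_mul T
    rw [mul_zero] at h3
    refine h3.congr fun m => ?_
    rw [div_pow, one_pow]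
    ring
  have hsq : Tendsto (fun m => x - chainP T n x m) atTop (nhds 0) := by
    apply squeeze_zero (fun m => by linarith [chainP_le T hT n x m hx])
      (fun m => le_of_lt (chainP_lt T hT n x m)) h0
  have := (tendsto_const_nhds (x := x) (f := atTop)).sub hsq
  simpa using this

lemma chain_floor_le_pow (T : ℝ) (hT : 0 < T) (n : ℕ) (x : ℝ) (m : ℕ) (hx : x ≤ T) :
    ⌊x * 2 ^ (n + m) / T⌋₊ ≤ 2 ^ (n + m) := by
  have h : x * 2 ^ (n + m) / T ≤ ((2 ^ (n + m) : ℕ) : ℝ) := by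
    push_cast
    rw [div_le_iff₀ hT]
    nlinarith [pow_pos (by norm_num : (0:ℝ) < 2) (n + m)]
  calc ⌊x * 2 ^ (n + m) / T⌋₊ ≤ ⌊((2 ^ (n + m) : ℕ) : ℝ)⌋₊ := Nat.floor_mono h
    _ = 2 ^ (n + m) := Nat.floor_natCast _

lemma chain_step {d : ℕ} (T : ℝ) (hT : 0 < T) (y : ℝ → EuclideanSpace ℝ (Fin d)) (n : ℕ)
    (x : ℝ) (m : ℕ) (hx : x ∈ Icc 0 T) :
    ENNReal.ofReal ‖y (chainP T n x (m + 1)) - y (chainP T n x m)‖ ≤ chainM T y n (m + 1) := by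
  have hu : 0 ≤ x * 2 ^ (n + m) / T := by
    have := hx.1; positivity
  have hdbl : x * 2 ^ (n + (m + 1)) / T = 2 * (x * 2 ^ (n + m) / T) := by
    rw [show n + (m + 1) = (n + m) + 1 by ring, pow_succ]; ring
  set a := ⌊x * 2 ^ (n + m) / T⌋₊ with ha
  set b := ⌊x * 2 ^ (n + (m + 1)) / T⌋₊ with hb
  have hb_ge : 2 * a ≤ b := by
    rw [hb, hdbl]
    apply Nat.le_floor
    push_cast
    nlinarith [Nat.floor_le hu]
  have hb_lt : b < 2 * a + 2 := by
    rw [hb, hdbl, Nat.floor_lt (by linarith)]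
    push_cast
    nlinarith [Nat.lt_floor_add_one (x * 2 ^ (n + m) / T)]
  have h2 : (0:ℝ) < 2 ^ (n + (m+1)) := by positivity
  rcases Nat.lt_or_ge b (2 * a + 1) with hcase | hcase
  · -- b = 2a, points equal
    have hba : b = 2 * a := by omega
    have heq : chainP T n x (m + 1) = chainP T n x m := by
      unfold chainP
      rw [← ha, ← hb, hba, show n + (m + 1) = (n + m) + 1 by ring, pow_succ]
      push_cast
      field_simp
    rw [heq]
    simp
  · -- b = 2a+1
    have hba : b = 2 * a + 1 := by omega
    have hlt : 2 * a < 2 ^ (n + (m + 1)) := by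
      have := chain_floor_le_pow T hT n x (m+1) hx.2
      omega
    have e1 : chainP T n x (m + 1) = (((2 * a : ℕ) : ℝ) + 1) * T / 2 ^ (n + (m + 1)) := by
      unfold chainP; rw [← hb, hba]; push_cast; ring_nf
    have e2 : chainP T n x m = ((2 * a : ℕ) : ℝ) * T / 2 ^ (n + (m + 1)) := by
      unfold chainP
      rw [← ha, show n + (m + 1) = (n + m) + 1 by ring, pow_succ]
      push_cast
      field_simp
    rw [e1, e2]
    exact chain_inc_le T y n (m + 1) (2 * a) hlt

end ChainingAux

lemma chain_tail {d : ℕ} (T : ℝ) (hT : 0 < T) (y : ℝ → EuclideanSpace ℝ (Fin d))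
    (hy : ContinuousOn y (Icc 0 T)) (n : ℕ) (x : ℝ) (hx : x ∈ Icc 0 T) :
    ENNReal.ofReal ‖y x - y (chainP T n x 0)‖ ≤ ∑' m : ℕ, chainM T y n (m + 1) := by
  have hsum : ∀ N : ℕ, ENNReal.ofReal ‖y (chainP T n x N) - y (chainP T n x 0)‖
      ≤ ∑ m ∈ Finset.range N, chainM T y n (m + 1) := by
    intro N
    induction N with
    | zero => simp
    | succ N ih =>
      have hdecomp : y (chainP T n x (N + 1)) - y (chainP T n x 0)
          = (y (chainP T n x (N + 1)) - y (chainP T n x N))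
            + (y (chainP T n x N) - y (chainP T n x 0)) := by abel
      calc ENNReal.ofReal ‖y (chainP T n x (N + 1)) - y (chainP T n x 0)‖
          ≤ ENNReal.ofReal (‖y (chainP T n x (N + 1)) - y (chainP T n x N)‖
              + ‖y (chainP T n x N) - y (chainP T n x 0)‖) := by
            apply ENNReal.ofReal_le_ofReal
            rw [hdecomp]
            exact norm_add_le _ _
        _ ≤ ENNReal.ofReal ‖y (chainP T n x (N + 1)) - y (chainP T n x N)‖
              + ENNReal.ofReal ‖y (chainP T n x N) - y (chainP T n x 0)‖ :=
            ENNReal.ofReal_add_le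
        _ ≤ chainM T y n (N + 1) + ∑ m ∈ Finset.range N, chainM T y n (m + 1) :=
            add_le_add (chain_step T hT y n x N hx) ih
        _ = ∑ m ∈ Finset.range (N + 1), chainM T y n (m + 1) := by
            rw [Finset.sum_range_succ]; ring
  have htend : Tendsto (fun N => y (chainP T n x N)) atTop (nhds (y x)) := by
    have h1 : Tendsto (chainP T n x) atTop (nhdsWithin x (Icc 0 T)) := by
      rw [tendsto_nhdsWithin_iff]
      exact ⟨chainP_tendsto T hT n x hx.1, Filter.Eventually.of_forall
        fun m => chainP_mem T hT n x m hx⟩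
    exact (hy x hx).tendsto.comp h1
  have htend2 : Tendsto (fun N => ENNReal.ofReal ‖y (chainP T n x N) - y (chainP T n x 0)‖)
      atTop (nhds (ENNReal.ofReal ‖y x - y (chainP T n x 0)‖)) := by
    apply (ENNReal.continuous_ofReal.tendsto _).comp
    exact ((htend.sub tendsto_const_nhds).norm)
  exact le_of_tendsto' htend2 fun N => (hsum N).trans (ENNReal.sum_le_tsum _ )

lemma chain_mid {d : ℕ} (T : ℝ) (hT : 0 < T) (y : ℝ → EuclideanSpace ℝ (Fin d)) (n : ℕ)
    (s t : ℝ) (hs0 : 0 ≤ s) (hst : s ≤ t) (htn : t ≤ s + T / 2 ^ n) (htT : t ≤ T) :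
    ENNReal.ofReal ‖y (chainP T n t 0) - y (chainP T n s 0)‖ ≤ chainM T y n 0 := by
  have h2 : (0:ℝ) < 2 ^ (n + 0) := by positivity
  set a := ⌊s * 2 ^ (n + 0) / T⌋₊ with ha
  set b := ⌊t * 2 ^ (n + 0) / T⌋₊ with hb
  have hab : a ≤ b := Nat.floor_mono (by gcongr)
  have hba : b ≤ a + 1 := by
    have harg : t * 2 ^ (n + 0) / T ≤ s * 2 ^ (n + 0) / T + 1 := by
      rw [div_add' _ _ _ (ne_of_gt hT), div_le_div_iff_of_pos_right hT]
      have hn0 : (2:ℝ) ^ (n + 0) = 2 ^ n := by norm_num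
      rw [hn0]
      have h2n : (0:ℝ) < 2 ^ n := by positivity
      have := htn
      rw [div_eq_mul_inv] at this
      nlinarith [mul_le_mul_of_nonneg_right this (le_of_lt h2n),
        mul_inv_cancel₀ (ne_of_gt h2n)]
    calc b ≤ ⌊s * 2 ^ (n + 0) / T + 1⌋₊ := Nat.floor_mono harg
      _ = a + 1 := by rw [Nat.floor_add_one (by positivity)]
  rcases Nat.lt_or_ge b (a + 1) with hcase | hcase
  · have hbe : b = a := by omega
    have heq : chainP T n t 0 = chainP T n s 0 := by
      unfold chainP; rw [← ha, ← hb, hbe]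
    rw [heq]; simp
  · have hbe : b = a + 1 := by omega
    have hlt : a < 2 ^ (n + 0) := by
      have := chain_floor_le_pow T hT n t 0 htT
      rw [← hb] at this
      omega
    have e1 : chainP T n t 0 = ((a : ℝ) + 1) * T / 2 ^ (n + 0) := by
      unfold chainP; rw [← hb, hbe]; push_cast; ring
    have e2 : chainP T n s 0 = (a : ℝ) * T / 2 ^ (n + 0) := by
      unfold chainP; rw [← ha]
    rw [e1, e2]
    exact chain_inc_le T y n 0 a hlt

/-- Chaining bound: for continuous `y : [0,T] → ℝ^d` and `n ≥ 0`,
`sup { ‖y t - y s‖ : 0 ≤ s ≤ t ≤ s + T/2^n, t ≤ T }` is at most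
`2 Σ_{m ≥ 0} max_{0 ≤ k < 2^{n+m}} ‖y(t^{n+m}_{k+1}) - y(t^{n+m}_k)‖`,
where `t^n_k = kT/2^n`. -/
theorem chaining_bound {d : ℕ} (T : ℝ) (hT : 0 < T)
    (y : ℝ → EuclideanSpace ℝ (Fin d)) (hy : ContinuousOn y (Icc 0 T)) (n : ℕ) :
    (⨆ p : {p : ℝ × ℝ // 0 ≤ p.1 ∧ p.1 ≤ p.2 ∧ p.2 ≤ p.1 + T / 2 ^ n ∧ p.2 ≤ T},
        ENNReal.ofReal ‖y p.1.2 - y p.1.1‖)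
      ≤ 2 * ∑' m : ℕ, ⨆ k : Fin (2 ^ (n + m)),
          ENNReal.ofReal
            ‖y ((((k : ℕ) : ℝ) + 1) * T / 2 ^ (n + m)) - y (((k : ℕ) : ℝ) * T / 2 ^ (n + m))‖ := by
  simp only [← chainM_def]
  refine iSup_le ?_
  rintro ⟨⟨s, t⟩, hs0, hst, htn, htT⟩
  simp only
  have hs : s ∈ Icc 0 T := ⟨hs0, hst.trans htT⟩
  have ht : t ∈ Icc 0 T := ⟨hs0.trans hst, htT⟩
  have hdecomp : y t - y s = (y t - y (chainP T n t 0)) + (y (chainP T n t 0)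
      - y (chainP T n s 0)) + (y (chainP T n s 0) - y s) := by abel
  have hS : ∑' m : ℕ, chainM T y n m
      = chainM T y n 0 + ∑' m : ℕ, chainM T y n (m + 1) :=
    tsum_eq_zero_add' ENNReal.summable
  calc ENNReal.ofReal ‖y t - y s‖
      ≤ ENNReal.ofReal (‖y t - y (chainP T n t 0)‖
          + ‖y (chainP T n t 0) - y (chainP T n s 0)‖
          + ‖y (chainP T n s 0) - y s‖) := by
        apply ENNReal.ofReal_le_ofReal
        rw [hdecomp]
        exact norm_add₃_le
    _ ≤ ENNReal.ofReal ‖y t - y (chainP T n t 0)‖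
          + ENNReal.ofReal ‖y (chainP T n t 0) - y (chainP T n s 0)‖
          + ENNReal.ofReal ‖y (chainP T n s 0) - y s‖ :=
        le_trans ENNReal.ofReal_add_le (add_le_add_left ENNReal.ofReal_add_le _)
    _ ≤ (∑' m : ℕ, chainM T y n (m + 1)) + chainM T y n 0
          + ∑' m : ℕ, chainM T y n (m + 1) := by
        refine add_le_add (add_le_add ?_ ?_) ?_
        · exact chain_tail T hT y hy n t ht
        · exact chain_mid T hT y n s t hs0 hst htn htT
        · rw [norm_sub_rev]
          exact chain_tail T hT y hy n s hs
    _ ≤ 2 * ∑' m : ℕ, chainM T y n m := by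
        rw [two_mul, hS]
        calc (∑' m : ℕ, chainM T y n (m + 1)) + chainM T y n 0
              + ∑' m : ℕ, chainM T y n (m + 1)
            = (chainM T y n 0 + ∑' m : ℕ, chainM T y n (m + 1))
              + ∑' m : ℕ, chainM T y n (m + 1) := by ring
          _ ≤ (chainM T y n 0 + ∑' m : ℕ, chainM T y n (m + 1))
              + (chainM T y n 0 + ∑' m : ℕ, chainM T y n (m + 1)) :=
            add_le_add_right le_add_self _
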